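/- For the countable system of convex cones in ℝ² given by Λ₁ := ℝ × ℝ₊ and Λ_i := {(x,y) : y ≤ x/i} for i ≥ 2, the system is extremal at the origin (for any ν > 0, (Λ₁ + (0,ν)) ∩ ⋂_{i≥2} Λ_i = ∅), the intersection ⋂_{i=1}^∞ Λ_i equals ℝ₊ × {0}, and the conic extremality conditions fail: any choice of x*_i ∈ N(0;Λ_i) with Σ 2^{-i} x*_i = 0 forces x*_i = 0 for all i. -/

import Mathlib

open Filter Topology

/-- The normal cone at the origin to a convex cone `Λ ⊆ ℝ²` (the polar cone). -/
def polarNormalCone (Λ : Set (ℝ × ℝ)) : Set (ℝ × ℝ) :=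
  {v | ∀ u ∈ Λ, v.1 * u.1 + v.2 * u.2 ≤ 0}

/-- The system of convex cones of Example 4.3: `Λ₁ = ℝ × ℝ₊` and
`Λ_i = {(x,y) : y ≤ x/i}` for `i ≥ 2` (here `S k` is `Λ_{k+1}`). -/
noncomputable def exampleCones : ℕ → Set (ℝ × ℝ) := fun i =>
  match i with
  | 0 => {p : ℝ × ℝ | 0 ≤ p.2}
  | Nat.succ k => {p : ℝ × ℝ | p.2 ≤ p.1 / (k + 2)}

lemma mem_cone_zero (p : ℝ × ℝ) : p ∈ exampleCones 0 ↔ 0 ≤ p.2 := Iff.rfl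

lemma mem_cone_succ (k : ℕ) (p : ℝ × ℝ) :
    p ∈ exampleCones (k + 1) ↔ p.2 ≤ p.1 / (k + 2) := Iff.rfl

lemma kpos (k : ℕ) : (0:ℝ) < (k:ℝ) + 2 := by positivity

/-- the system `exampleCones` is extremal at the origin, its intersection
is `ℝ₊ × {0}` (so the nonoverlapping condition fails), and the conic extremality
conditions fail: any normals summing to zero must all vanish. -/
theorem nonoverlapping_condition_essential :
    (∀ ν : ℝ, 0 < ν →
      ((fun p : ℝ × ℝ => p + ((0 : ℝ), ν)) '' exampleCones 0) ∩
        (⋂ i : ℕ, exampleCones (i + 1)) = ∅) ∧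
    (⋂ i : ℕ, exampleCones i) = {p : ℝ × ℝ | 0 ≤ p.1 ∧ p.2 = 0} ∧
    (∀ x : ℕ → ℝ × ℝ, (∀ i, x i ∈ polarNormalCone (exampleCones i)) →
      HasSum (fun i => (1 / 2 ^ (i + 1) : ℝ) • x i) 0 → ∀ i, x i = 0) := by
  refine ⟨?_, ?_, ?_⟩
  · intro ν hν
    ext p
    simp only [Set.mem_inter_iff, Set.mem_image, Set.mem_iInter, Set.mem_empty_iff_false,
      iff_false, not_and]
    rintro ⟨q, hq, rfl⟩ h
    rw [mem_cone_zero] at hq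
    have hp2 : ν ≤ (q + ((0:ℝ), ν)).2 := by simp [Prod.snd_add]; linarith
    obtain ⟨n, hn⟩ := exists_nat_gt ((q + ((0:ℝ), ν)).1 / ν)
    have h1 := (mem_cone_succ n _).mp (h n)
    have h2 : (q + ((0:ℝ), ν)).2 * ((n:ℝ) + 2) ≤ (q + ((0:ℝ), ν)).1 :=
      (le_div_iff₀ (kpos n)).mp h1
    have h3 : (q + ((0:ℝ), ν)).1 / ν < (n:ℝ) + 2 := by linarith
    have h4 : (q + ((0:ℝ), ν)).1 < ((n:ℝ) + 2) * ν := by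
      rwa [div_lt_iff₀ hν] at h3
    nlinarith [kpos n]
  · ext p
    simp only [Set.mem_iInter, Set.mem_setOf_eq]
    constructor
    · intro h
      have h0 : 0 ≤ p.2 := h 0
      have hp2 : p.2 = 0 := by
        by_contra hne
        have hpos : 0 < p.2 := lt_of_le_of_ne h0 (Ne.symm hne)
        obtain ⟨n, hn⟩ := exists_nat_gt (p.1 / p.2)
        have h1 := (mem_cone_succ n _).mp (h (n + 1))
        have h2 : p.2 * ((n:ℝ) + 2) ≤ p.1 := (le_div_iff₀ (kpos n)).mp h1
        have h3 : p.1 / p.2 < (n:ℝ) + 2 := by linarith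
        have h4 : p.1 < ((n:ℝ) + 2) * p.2 := by rwa [div_lt_iff₀ hpos] at h3
        nlinarith
      have h1 := (mem_cone_succ 0 _).mp (h 1)
      rw [hp2] at h1
      refine ⟨?_, hp2⟩
      by_contra hneg
      push_neg at hneg
      have : p.1 / ((0:ℝ) + 2) < 0 := div_neg_of_neg_of_pos hneg (by norm_num)
      linarith
    · rintro ⟨h1, h2⟩ i
      match i with
      | 0 => exact le_of_eq h2.symm
      | Nat.succ k =>
        rw [mem_cone_succ, h2]
        positivity
  · intro x hx hsum
    -- component sums
    have hfst : HasSum (fun i => (1 / 2 ^ (i + 1) : ℝ) * (x i).1) 0 := by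
      have := hsum.map (ContinuousLinearMap.fst ℝ ℝ ℝ) (ContinuousLinearMap.fst ℝ ℝ ℝ).continuous
      simpa [Function.comp_def] using this
    have hsnd : HasSum (fun i => (1 / 2 ^ (i + 1) : ℝ) * (x i).2) 0 := by
      have := hsum.map (ContinuousLinearMap.snd ℝ ℝ ℝ) (ContinuousLinearMap.snd ℝ ℝ ℝ).continuous
      simpa [Function.comp_def] using this
    -- facts about normals
    have h0fst : (x 0).1 = 0 := by
      have ha := hx 0 ((1:ℝ), (0:ℝ)) (by simp [mem_cone_zero])
      have hb := hx 0 ((-1:ℝ), (0:ℝ)) (by simp [mem_cone_zero])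
      simp at ha hb
      linarith
    have hs : ∀ k : ℕ, (x (k+1)).1 * ((k:ℝ) + 2) + (x (k+1)).2 = 0 ∧ 0 ≤ (x (k+1)).2 := by
      intro k
      have ha := hx (k+1) (((k:ℝ) + 2), (1:ℝ)) (by
        rw [mem_cone_succ]; simp [div_self (kpos k).ne'])
      have hb := hx (k+1) ((-((k:ℝ) + 2)), (-1:ℝ)) (by
        rw [mem_cone_succ]
        simp only
        rw [le_div_iff₀ (kpos k)]
        ring_nf
        nlinarith [kpos k])
      have hc := hx (k+1) ((0:ℝ), (-1:ℝ)) (by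
        rw [mem_cone_succ]
        simp only
        rw [le_div_iff₀ (kpos k)]
        nlinarith [kpos k])
      simp only at ha hb hc
      constructor
      · nlinarith
      · nlinarith
    have hfle : ∀ i, (fun i => (1 / 2 ^ (i + 1) : ℝ) * (x i).1) i ≤ 0 := by
      intro i
      match i with
      | 0 => simp [h0fst]
      | Nat.succ k =>
        have ⟨he, hge⟩ := hs k
        have hx1 : (x (k+1)).1 ≤ 0 := by nlinarith [kpos k]
        have : (0:ℝ) < 1 / 2 ^ (k + 1 + 1) := by positivity
        exact mul_nonpos_of_nonneg_of_nonpos this.le hx1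
    have hf0 : ∀ i, (1 / 2 ^ (i + 1) : ℝ) * (x i).1 = 0 := by
      intro i
      have hge : 0 ≤ (1 / 2 ^ (i + 1) : ℝ) * (x i).1 := by
        have hneg : HasSum (fun i => -((1 / 2 ^ (i + 1) : ℝ) * (x i).1)) 0 := by
          simpa using hfst.neg
        have := le_hasSum hneg i (fun j _ => by simpa using hfle j)
        linarith
      exact le_antisymm (hfle i) hge
    have hx1 : ∀ i, (x i).1 = 0 := by
      intro i
      have := hf0 i
      have hp : (0:ℝ) < 1 / 2 ^ (i + 1) := by positivity
      exact by
        field_simp at this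
        simpa using this
    have hxsucc : ∀ k, x (k + 1) = 0 := by
      intro k
      have ⟨he, _⟩ := hs k
      have h2 : (x (k+1)).2 = 0 := by rw [hx1 (k+1)] at he; linarith
      exact Prod.ext (hx1 (k+1)) h2
    have h02 : (x 0).2 = 0 := by
      have hsingle : HasSum (fun i => (1 / 2 ^ (i + 1) : ℝ) * (x i).2)
          ((1 / 2 ^ (0 + 1) : ℝ) * (x 0).2) := by
        apply hasSum_single 0
        intro b hb
        match b with
        | 0 => exact absurd rfl hb
        | Nat.succ k => simp [hxsucc k]
      have := hsnd.unique hsingle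
      have hp : (0:ℝ) < 1 / 2 ^ (0 + 1) := by positivity
      field_simp at this
      linarith
    intro i
    match i with
    | 0 => exact Prod.ext (hx1 0) h02
    | Nat.succ k => exact hxsucc k
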